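/- Let H ≥ 1 and let α_t = (H+1)/(H+t), α_t^i = α_i ∏_{j=i+1}^t (1−α_j). Suppose a nonnegative double sequence (e_h^t) for h ∈ {1,…,H+1}, t ≥ 1 satisfies e_{H+1}^t = 0 and e_h^t ≤ ∑_{i=1}^t α_t^i e_{h+1}^i + B/√t for all h ≤ H and t ≥ 1, where B ≥ 0 is a constant. Then e_h^t ≤ B(1+H−h)(1+1/H)^{H−h}/√t for all h, t; in particular e_1^t ≤ eBH/√t. -/

import Mathlib

/-- Learning rate `α_t = (H+1)/(H+t)`. -/
noncomputable def lr (H t : ℕ) : ℝ := (H + 1) / (H + t)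

/-- Weight `α_t^i = α_i ∏_{j=i+1}^t (1 - α_j)`. -/
noncomputable def lrW (H t i : ℕ) : ℝ :=
  lr H i * ∏ j ∈ Finset.Icc (i + 1) t, (1 - lr H j)

lemma lr_pos {H t : ℕ} (ht : 1 ≤ t) : 0 < lr H t := by
  unfold lr
  apply div_pos <;> positivity

lemma lr_le_one {H t : ℕ} (ht : 1 ≤ t) : lr H t ≤ 1 := by
  unfold lr
  rw [div_le_one (by positivity)]
  have : (1:ℝ) ≤ t := by exact_mod_cast ht
  linarith

lemma lrW_nonneg {H t i : ℕ} : 0 ≤ lrW H t i := by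
  unfold lrW
  apply mul_nonneg
  · unfold lr; positivity
  · apply Finset.prod_nonneg
    intro j hj
    simp only [Finset.mem_Icc] at hj
    have := lr_le_one (H := H) (t := j) (by omega)
    linarith

lemma lrW_self {H t : ℕ} : lrW H t t = lr H t := by
  unfold lrW
  rw [Finset.Icc_eq_empty (by omega), Finset.prod_empty, mul_one]

lemma lrW_succ_top {H t i : ℕ} (h : i ≤ t) :
    lrW H (t+1) i = lrW H t i * (1 - lr H (t+1)) := by
  unfold lrW
  rw [Finset.prod_Icc_succ_top (by omega), mul_assoc]

lemma weightSum (H : ℕ) (hH : 1 ≤ H) :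
    ∀ t, 1 ≤ t → ∑ i ∈ Finset.Icc 1 t, lrW H t i / Real.sqrt i
      ≤ (1 + 1 / (H:ℝ)) / Real.sqrt t := by
  intro t
  induction t with
  | zero => omega
  | succ t ih =>
    intro _
    rcases Nat.eq_zero_or_pos t with rfl | ht
    · simp only [Finset.Icc_self, Finset.sum_singleton, lrW_self]
      have : lr H 1 = 1 := by
        unfold lr; rw [div_eq_one_iff_eq (by positivity)]; push_cast; ring
      rw [this]
      have h1 : (0:ℝ) ≤ 1/(H:ℝ) := by positivity
      norm_num
    · have hH' : (1:ℝ) ≤ H := by exact_mod_cast hH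
      have ht' : (1:ℝ) ≤ t := by exact_mod_cast ht
      set c : ℝ := 1 + 1/(H:ℝ) with hc
      have hs : (0:ℝ) < Real.sqrt t := Real.sqrt_pos.2 (by linarith)
      have hs' : (0:ℝ) < Real.sqrt (t+1) := Real.sqrt_pos.2 (by linarith)
      have hss : Real.sqrt t ≤ Real.sqrt (t+1) := Real.sqrt_le_sqrt (by linarith)
      have hα0 : 0 < lr H (t+1) := lr_pos (by omega)
      have hα1 : lr H (t+1) ≤ 1 := lr_le_one (by omega)
      have hcast : ((t+1 : ℕ) : ℝ) = (t:ℝ) + 1 := by push_cast; ring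
      rw [Finset.sum_Icc_succ_top (by omega), lrW_self, hcast]
      have hsum : ∑ i ∈ Finset.Icc 1 t, lrW H (t+1) i / Real.sqrt i
          = (1 - lr H (t+1)) * ∑ i ∈ Finset.Icc 1 t, lrW H t i / Real.sqrt i := by
        rw [Finset.mul_sum]
        apply Finset.sum_congr rfl
        intro i hi
        simp only [Finset.mem_Icc] at hi
        rw [lrW_succ_top hi.2]
        ring
      rw [hsum]
      have step1 : (1 - lr H (t+1)) * ∑ i ∈ Finset.Icc 1 t, lrW H t i / Real.sqrt i
          ≤ (1 - lr H (t+1)) * (c / Real.sqrt t) :=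
        mul_le_mul_of_nonneg_left (ih ht) (by linarith)
      have key : (1 - lr H (t+1)) * (c / Real.sqrt t) + lr H (t+1) / Real.sqrt (t+1)
          ≤ c / Real.sqrt (t+1) := by
        have hα : lr H (t+1) = ((H:ℝ)+1) / ((H:ℝ) + (t:ℝ) + 1) := by
          unfold lr; push_cast; ring_nf
        rw [hα]
        set s := Real.sqrt t
        set s' := Real.sqrt (t+1)
        have h1 : s * s = t := Real.mul_self_sqrt (by linarith)
        have h2 : s' * s' = (t:ℝ)+1 := Real.mul_self_sqrt (by linarith)
        rw [← sub_nonneg]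
        have expand : c / s' - ((1 - ((H:ℝ)+1)/((H:ℝ)+(t:ℝ)+1)) * (c/s)
              + (((H:ℝ)+1)/((H:ℝ)+(t:ℝ)+1)) / s')
            = (c * ((t:ℝ)+1) * s - c * (t:ℝ) * s')
              / (((H:ℝ)+(t:ℝ)+1) * (s * s')) := by
          have hHne : (H:ℝ) ≠ 0 := by linarith
          rw [hc]
          field_simp
          ring
        rw [expand]
        apply div_nonneg _ (by positivity)
        have : (t:ℝ) * s' ≤ ((t:ℝ)+1) * s := by
          nlinarith [mul_nonneg (mul_nonneg hs.le hs'.le) (sub_nonneg.2 hss)]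
        have hc0 : (0:ℝ) ≤ c := by rw [hc]; positivity
        nlinarith
      calc (1 - lr H (t+1)) * ∑ i ∈ Finset.Icc 1 t, lrW H t i / Real.sqrt i
            + lr H (t+1) / Real.sqrt ((t:ℝ)+1)
          ≤ (1 - lr H (t+1)) * (c / Real.sqrt t) + lr H (t+1) / Real.sqrt ((t:ℝ)+1) := by
            linarith
        _ ≤ c / Real.sqrt ((t:ℝ)+1) := key

theorem stmt17 (H : ℕ) (hH : 1 ≤ H) (B : ℝ) (hB : 0 ≤ B)
    (e : ℕ → ℕ → ℝ)
    (hnn : ∀ h t, 0 ≤ e h t)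
    (hend : ∀ t, 1 ≤ t → e (H + 1) t = 0)
    (hrec : ∀ h t, 1 ≤ h → h ≤ H → 1 ≤ t →
      e h t ≤ ∑ i ∈ Finset.Icc 1 t, lrW H t i * e (h + 1) i + B / Real.sqrt t) :
    (∀ h t, 1 ≤ h → h ≤ H → 1 ≤ t →
      e h t ≤ B * (1 + (H : ℝ) - h) * (1 + 1 / (H : ℝ)) ^ (H - h) / Real.sqrt t) ∧
    (∀ t, 1 ≤ t → e 1 t ≤ Real.exp 1 * B * H / Real.sqrt t) := by
  have hH' : (1:ℝ) ≤ H := by exact_mod_cast hH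
  set c : ℝ := 1 + 1/(H:ℝ) with hc
  have h1H : (0:ℝ) < 1/(H:ℝ) := by positivity
  have hc1 : (1:ℝ) ≤ c := by rw [hc]; linarith
  have hc0 : (0:ℝ) ≤ c := by linarith
  -- main claim by induction on d, where h = H + 1 - d
  have claim : ∀ d, d ≤ H → ∀ t, 1 ≤ t →
      e (H + 1 - d) t ≤ B * d * c ^ (d - 1) / Real.sqrt t := by
    intro d
    induction d with
    | zero =>
      intro _ t ht
      simp only [Nat.sub_zero, hend t ht, Nat.cast_zero, mul_zero, zero_mul, zero_div, le_refl]
    | succ d ih =>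
      intro hd t ht
      have hdH : d ≤ H := by omega
      have hg : H + 1 - (d + 1) = H - d := by omega
      have hg' : (H - d) + 1 = H + 1 - d := by omega
      have h1 : 1 ≤ H - d := by omega
      have h2 : H - d ≤ H := by omega
      rw [hg]
      have hs : (0:ℝ) < Real.sqrt t := by
        apply Real.sqrt_pos.2; exact_mod_cast Nat.pos_of_ne_zero (by omega)
      have hrec' := hrec (H - d) t h1 h2 ht
      rw [hg'] at hrec'
      have hsum : ∑ i ∈ Finset.Icc 1 t, lrW H t i * e (H + 1 - d) i
          ≤ B * d * c ^ (d - 1) * ((1 + 1/(H:ℝ)) / Real.sqrt t) := by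
        calc ∑ i ∈ Finset.Icc 1 t, lrW H t i * e (H + 1 - d) i
            ≤ ∑ i ∈ Finset.Icc 1 t, lrW H t i * (B * d * c ^ (d - 1) / Real.sqrt i) := by
              apply Finset.sum_le_sum
              intro i hi
              simp only [Finset.mem_Icc] at hi
              exact mul_le_mul_of_nonneg_left (ih hdH i hi.1) lrW_nonneg
          _ = B * d * c ^ (d - 1) * ∑ i ∈ Finset.Icc 1 t, lrW H t i / Real.sqrt i := by
              rw [Finset.mul_sum]; apply Finset.sum_congr rfl; intro i _; ring
          _ ≤ B * d * c ^ (d - 1) * ((1 + 1/(H:ℝ)) / Real.sqrt t) := by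
              apply mul_le_mul_of_nonneg_left (weightSum H hH t ht)
              positivity
      have hfin : B * d * c ^ (d - 1) * ((1 + 1/(H:ℝ)) / Real.sqrt t) + B / Real.sqrt t
          ≤ B * (d + 1 : ℕ) * c ^ ((d + 1) - 1) / Real.sqrt t := by
        rcases Nat.eq_zero_or_pos d with rfl | hd0
        · simp
        · have hpow : c ^ (d - 1) * c = c ^ d := by
            rw [← pow_succ]; congr 1; omega
          have hBc : B ≤ B * c ^ d := by
            nlinarith [one_le_pow₀ hc1 (n := d)]
          have : B * d * c ^ (d-1) * ((1 + 1/(H:ℝ)) / Real.sqrt t)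
              = B * d * (c ^ (d-1) * c) / Real.sqrt t := by rw [← hc]; ring
          rw [this, hpow, Nat.add_sub_cancel]
          rw [← add_div, div_le_div_iff₀ hs hs]
          have hd' : (0:ℝ) ≤ (d:ℝ) := by positivity
          push_cast
          nlinarith [pow_nonneg hc0 d]
      calc e (H - d) t ≤ _ := hrec'
        _ ≤ B * d * c ^ (d - 1) * ((1 + 1/(H:ℝ)) / Real.sqrt t) + B / Real.sqrt t := by
            linarith
        _ ≤ B * (d + 1 : ℕ) * c ^ ((d + 1) - 1) / Real.sqrt t := hfin
  constructor
  · intro h t h1 h2 ht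
    have hd : h = H + 1 - (H + 1 - h) := by omega
    have := claim (H + 1 - h) (by omega) t ht
    rw [← hd] at this
    have hcast : ((H + 1 - h : ℕ) : ℝ) = 1 + (H:ℝ) - h := by
      have : ((H + 1 - h : ℕ) : ℝ) = ((H:ℝ) + 1) - h := by
        rw [Nat.cast_sub (by omega)]; push_cast; ring
      linarith [this]
    have hexp : (H + 1 - h) - 1 = H - h := by omega
    rw [hcast, hexp] at this
    exact this
  · intro t ht
    have h1 := claim H (le_refl H) t ht
    have hg : H + 1 - H = 1 := by omega
    rw [hg] at h1
    have hs : (0:ℝ) < Real.sqrt t := by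
      apply Real.sqrt_pos.2; exact_mod_cast Nat.pos_of_ne_zero (by omega)
    have hce : c ^ (H - 1) ≤ Real.exp 1 := by
      calc c ^ (H - 1) ≤ c ^ H := pow_le_pow_right₀ hc1 (by omega)
        _ ≤ (Real.exp (1/(H:ℝ))) ^ H := by
            apply pow_le_pow_left₀ hc0
            rw [hc]; rw [add_comm]
            exact Real.add_one_le_exp _
        _ = Real.exp 1 := by
            rw [← Real.exp_nat_mul]
            congr 1
            field_simp
    calc e 1 t ≤ B * H * c ^ (H - 1) / Real.sqrt t := h1
      _ ≤ Real.exp 1 * B * H / Real.sqrt t := by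
          rw [div_le_div_iff₀ hs hs]
          have hnum : B * H * c ^ (H - 1) ≤ Real.exp 1 * B * H := by
            nlinarith [mul_nonneg (mul_nonneg hB (by linarith : (0:ℝ) ≤ (H:ℝ)))
              (sub_nonneg.2 hce)]
          exact mul_le_mul_of_nonneg_right hnum hs.le
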